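/- If P is a ring of subsets of a set X with P ⊆ P_seq, then the Q_P-topology on X/P is completely regular. -/

import Mathlib

open Set Topology

/-- The equivalence relation identifying points lying in exactly the same members of `P`. -/
def pSetoid {X : Type*} (P : Set (Set X)) : Setoid X where
  r x y := ∀ V ∈ P, x ∈ V ↔ y ∈ V
  iseqv := ⟨fun _ _ _ => Iff.rfl, fun h V hV => (h V hV).symm,
    fun h1 h2 V hV => (h1 V hV).trans (h2 V hV)⟩

/-- The quotient `X/P`. -/
def pQuot {X : Type*} (P : Set (Set X)) : Type _ := Quotient (pSetoid P)

/-- The `Q_P`-map `q : X → X/P`. -/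
def pMap {X : Type*} (P : Set (Set X)) : X → pQuot P := Quotient.mk (pSetoid P)

/-- The `Q_P`-topology on `X/P`, generated by the images `q[V]`, `V ∈ P`. -/
def pTop {X : Type*} (P : Set (Set X)) : TopologicalSpace (pQuot P) :=
  TopologicalSpace.generateFrom {S | ∃ V ∈ P, S = pMap P '' V}

/-- `R_seq`: sets `W` that are unions `⋃ₙ Uₙ` with `Uₖ ⊆ X \ Vₖ ⊆ Uₖ₊₁`, `Uₙ, Vₙ ∈ R`. -/
def seqFam {X : Type*} (R : Set (Set X)) : Set (Set X) :=
  {W | ∃ U V : ℕ → Set X, (∀ n, U n ∈ R) ∧ (∀ n, V n ∈ R) ∧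
    (∀ k, U k ⊆ (V k)ᶜ ∧ (V k)ᶜ ⊆ U (k + 1)) ∧ (⋃ n, U n) = W}

/-- The family of cozero sets of `X`. -/
def cozeroFam (X : Type*) [TopologicalSpace X] : Set (Set X) :=
  {W | ∃ f : X → ℝ, Continuous f ∧ (∀ x, f x ∈ Set.Icc (0 : ℝ) 1) ∧ W = f ⁻¹' Set.Ioc 0 1}

/-- A skeletal map: a continuous surjection such that the closure of the image of every
nonempty open set has nonempty interior. -/
def IsSkeletal {X Y : Type*} [TopologicalSpace X] [TopologicalSpace Y] (f : X → Y) : Prop :=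
  Continuous f ∧ Function.Surjective f ∧
    ∀ U : Set X, IsOpen U → U.Nonempty → (interior (closure (f '' U))).Nonempty

/-- A skeletal family of open subsets of `X`. -/
def SkeletalFamily {X : Type*} [TopologicalSpace X] (P : Set (Set X)) : Prop :=
  ∀ V : Set X, IsOpen V → V.Nonempty →
    ∃ W ∈ P, ∀ U ∈ P, U ⊆ W → U.Nonempty → (U ∩ V).Nonempty

/-- A π-base: a family of nonempty open sets such that every nonempty open set contains
a member of the family. -/
def IsPiBase {Y : Type*} [TopologicalSpace Y] (B : Set (Set Y)) : Prop :=
  (∀ b ∈ B, IsOpen b ∧ b.Nonempty) ∧ ∀ U : Set Y, IsOpen U → U.Nonempty → ∃ b ∈ B, b ⊆ U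

/-- A strategy for Player I in the open-open game produces nonempty open sets. -/
def ValidStrategy {X : Type*} [TopologicalSpace X] (σ : List (Set X) → Set X) : Prop :=
  ∀ l : List (Set X), IsOpen (σ l) ∧ (σ l).Nonempty

/-- `B` is a play of Player II against the strategy `σ` of Player I: each `B n` is a
nonempty open subset of the set produced by `σ` from the previous moves of Player II. -/
def IsPlayAgainst {X : Type*} [TopologicalSpace X] (σ : List (Set X) → Set X)
    (B : ℕ → Set X) : Prop :=
  ∀ n, IsOpen (B n) ∧ (B n).Nonempty ∧ B n ⊆ σ (List.ofFn (fun i : Fin n => B i))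

/-- A winning strategy for Player I in the open-open game: every play of Player II against
it has dense union. -/
def WinningStrategy {X : Type*} [TopologicalSpace X] (σ : List (Set X) → Set X) : Prop :=
  ValidStrategy σ ∧ ∀ B : ℕ → Set X, IsPlayAgainst σ B → Dense (⋃ n, B n)

/-- A space is I-favorable if Player I has a winning strategy in the open-open game. -/
def IFavorable (X : Type*) [TopologicalSpace X] : Prop :=
  ∃ σ : List (Set X) → Set X, WinningStrategy σ

/-- `P` is closed under the strategy `σ`. -/
def ClosedUnderStrategy {X : Type*} [TopologicalSpace X] (P : Set (Set X))
    (σ : List (Set X) → Set X) : Prop :=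
  σ [] ∈ P ∧ ∀ l : List (Set X), (∀ b ∈ l, b ∈ P) → σ l ∈ P

/-- The limit of an inverse system, as the subspace of threads in the product. -/
abbrev invLimit {ι : Type*} [Preorder ι] (Y : ι → Type*)
    (bond : ∀ i j : ι, i ≤ j → Y j → Y i) : Type _ :=
  {u : ∀ i, Y i // ∀ (i j : ι) (h : i ≤ j), bond i j h (u j) = u i}

/-- The topology of the inverse limit, with explicitly given topologies on factors. -/
def invLimitTop {ι : Type*} [Preorder ι] (Y : ι → Type*) (t : ∀ i, TopologicalSpace (Y i))
    (bond : ∀ i j : ι, i ≤ j → Y j → Y i) : TopologicalSpace (invLimit Y bond) :=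
  @instTopologicalSpaceSubtype _ _ (@Pi.topologicalSpace ι Y t)

/-- σ-completeness of an inverse system: each countable chain of indices has a least upper
bound `l`, and the canonical map from `Y l` to the limit of the countable subsystem is a
homeomorphism (an embedding whose range is the set of threads). -/
def SigmaComplete {ι : Type*} [Preorder ι] (Y : ι → Type*) (t : ∀ i, TopologicalSpace (Y i))
    (bond : ∀ i j : ι, i ≤ j → Y j → Y i) : Prop :=
  (∀ s : ℕ → ι, Monotone s → ∃ l, IsLUB (Set.range s) l) ∧
  ∀ (s : ℕ → ι) (hs : Monotone s) (l : ι) (hl : IsLUB (Set.range s) l),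
    @IsEmbedding (Y l) (∀ n, Y (s n)) (t l) (@Pi.topologicalSpace ℕ _ (fun n => t (s n)))
      (fun x n => bond (s n) l (hl.1 (Set.mem_range_self n)) x) ∧
    Set.range (fun (x : Y l) (n : ℕ) => bond (s n) l (hl.1 (Set.mem_range_self n)) x) =
      {u : ∀ n, Y (s n) | ∀ (n m : ℕ) (h : n ≤ m), bond (s n) (s m) (hs h) (u m) = u n}

/-- A σ-complete inverse system of topological spaces over a directed partial order,
with continuous surjective bonding maps. -/
structure TopInvSystem : Type 1 where
  ι : Type
  [ord : PartialOrder ι]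
  directed : IsDirected ι (· ≤ ·)
  Y : ι → Type
  [t : ∀ i, TopologicalSpace (Y i)]
  bond : ∀ i j : ι, i ≤ j → Y j → Y i
  bond_refl : ∀ i (x : Y i), bond i i le_rfl x = x
  bond_comp : ∀ (i j k : ι) (hij : i ≤ j) (hjk : j ≤ k) (x : Y k),
    bond i j hij (bond j k hjk x) = bond i k (hij.trans hjk) x
  bond_cont : ∀ (i j : ι) (h : i ≤ j), Continuous (bond i j h)
  bond_surj : ∀ (i j : ι) (h : i ≤ j), Function.Surjective (bond i j h)
  sigmaComplete : SigmaComplete Y t bond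

instance (S : TopInvSystem) : PartialOrder S.ι := S.ord
instance (S : TopInvSystem) (i : S.ι) : TopologicalSpace (S.Y i) := S.t i

/-- The limit of a `TopInvSystem`. -/
def TopInvSystem.Limit (S : TopInvSystem) : Type := invLimit S.Y S.bond

instance (S : TopInvSystem) : TopologicalSpace S.Limit :=
  inferInstanceAs (TopologicalSpace (invLimit S.Y S.bond))

/-- The bonding map `X/R → X/P` for `P ⊆ R`, sending `[x]_R` to `[x]_P`. -/
def pBond {X : Type*} (P R : Set (Set X)) (h : P ⊆ R) : pQuot R → pQuot P :=
  Quotient.lift (pMap P) (fun _ _ hab => Quotient.sound (fun V hV => hab V (h hV)))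

/-- A `T`-club on a space `X` (with `T` the cozero sets): a collection of countable
subfamilies of `T`, each closed under a fixed winning strategy for Player I, closed under
finite unions and intersections, contained in its `seq`-family, which is cofinal among
countable subfamilies of `T` and closed under countable chains. -/
def TClub {X : Type*} [TopologicalSpace X] (C : Set (Set (Set X))) : Prop :=
  ∃ σ : List (Set X) → Set X, WinningStrategy σ ∧
    (∀ P ∈ C, P.Countable ∧ P ⊆ cozeroFam X ∧ ClosedUnderStrategy P σ ∧
      (∀ A ∈ P, ∀ B ∈ P, A ∪ B ∈ P ∧ A ∩ B ∈ P) ∧ P ⊆ seqFam P) ∧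
    (∀ Q : Set (Set X), Q.Countable → Q ⊆ cozeroFam X → ∃ P ∈ C, Q ⊆ P) ∧
    (∀ f : ℕ → Set (Set X), (∀ n, f n ∈ C) → Monotone f → (⋃ n, f n) ∈ C)


section AuxProof

open TopologicalSpace

variable {X : Type*} {P : Set (Set X)}

/-- Saturation with respect to the equivalence induced by `P`. -/
def pSat (P : Set (Set X)) (A : Set X) : Prop :=
  ∀ a b : X, (∀ V ∈ P, a ∈ V ↔ b ∈ V) → (a ∈ A ↔ b ∈ A)

lemma pSat_of_mem {A : Set X} (hA : A ∈ P) : pSat P A := fun _ _ h => h A hA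

lemma pSat_compl {A : Set X} (hA : pSat P A) : pSat P Aᶜ :=
  fun a b h => not_congr (hA a b h)

lemma pSat_inter {A B : Set X} (hA : pSat P A) (hB : pSat P B) : pSat P (A ∩ B) :=
  fun a b h => and_congr (hA a b h) (hB a b h)

lemma mem_pimg {A : Set X} (hA : pSat P A) {a : X} :
    pMap P a ∈ pMap P '' A ↔ a ∈ A := by
  constructor
  · rintro ⟨b, hb, hba⟩
    exact (hA b a (Quotient.exact hba)).mp hb
  · exact fun h => ⟨a, h, rfl⟩

lemma pimg_compl {A : Set X} (hA : pSat P A) :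
    pMap P '' Aᶜ = (pMap P '' A)ᶜ := by
  ext y
  obtain ⟨a, rfl⟩ := Quotient.exists_rep y
  exact (mem_pimg (pSat_compl hA)).trans (not_congr (mem_pimg hA)).symm

lemma pimg_inter {A B : Set X} (hA : pSat P A) (hB : pSat P B) :
    pMap P '' (A ∩ B) = pMap P '' A ∩ pMap P '' B := by
  ext y
  obtain ⟨a, rfl⟩ := Quotient.exists_rep y
  exact (mem_pimg (pSat_inter hA hB)).trans
    (and_congr (mem_pimg hA) (mem_pimg hB)).symm

lemma pimg_isOpen {V : Set X} (hV : V ∈ P) :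
    IsOpen[pTop P] (pMap P '' V) :=
  isOpen_generateFrom_of_mem ⟨V, hV, rfl⟩

lemma pTop_exists_basic (hring : ∀ A ∈ P, ∀ B ∈ P, A ∪ B ∈ P ∧ A ∩ B ∈ P)
    {O : Set (pQuot P)} (hO : IsOpen[pTop P] O) :
    ∀ x ∈ O, O = Set.univ ∨ ∃ W ∈ P, x ∈ pMap P '' W ∧ pMap P '' W ⊆ O := by
  have hO' : TopologicalSpace.GenerateOpen {S | ∃ V ∈ P, S = pMap P '' V} O := hO
  clear hO
  induction hO' with
  | basic s hs =>
      obtain ⟨V, hV, rfl⟩ := hs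
      exact fun x hx => Or.inr ⟨V, hV, hx, subset_rfl⟩
  | univ => exact fun x _ => Or.inl rfl
  | inter s t _ _ ihs iht =>
      intro x hx
      rcases ihs x hx.1 with rfl | ⟨W, hW, hxW, hWs⟩
      · rcases iht x hx.2 with rfl | ⟨W, hW, hxW, hWt⟩
        · exact Or.inl (Set.univ_inter _)
        · exact Or.inr ⟨W, hW, hxW, fun y hy => ⟨trivial, hWt hy⟩⟩
      · rcases iht x hx.2 with rfl | ⟨W', hW', hxW', hWt⟩
        · exact Or.inr ⟨W, hW, hxW, fun y hy => ⟨hWs hy, trivial⟩⟩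
        · refine Or.inr ⟨W ∩ W', (hring W hW W' hW').2, ?_, ?_⟩
          · rw [pimg_inter (pSat_of_mem hW) (pSat_of_mem hW')]
            exact ⟨hxW, hxW'⟩
          · rw [pimg_inter (pSat_of_mem hW) (pSat_of_mem hW')]
            exact fun y hy => ⟨hWs hy.1, hWt hy.2⟩
  | sUnion S _ ih =>
      intro x hx
      obtain ⟨s, hsS, hxs⟩ := hx
      rcases ih s hsS x hxs with rfl | ⟨W, hW, hxW, hWs⟩
      · exact Or.inl (Set.eq_univ_of_univ_subset (Set.subset_sUnion_of_mem hsS))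
      · exact Or.inr ⟨W, hW, hxW, hWs.trans (Set.subset_sUnion_of_mem hsS)⟩

lemma pTop_regularSpace (hring : ∀ A ∈ P, ∀ B ∈ P, A ∪ B ∈ P ∧ A ∩ B ∈ P)
    (hseq : P ⊆ seqFam P) : @RegularSpace (pQuot P) (pTop P) := by
  letI : TopologicalSpace (pQuot P) := pTop P
  apply RegularSpace.of_exists_mem_nhds_isClosed_subset
  intro x s hs
  obtain ⟨O, hOs, hO, hxO⟩ := mem_nhds_iff.mp hs
  rcases pTop_exists_basic hring hO x hxO with rfl | ⟨W, hW, hxW, hWO⟩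
  · exact ⟨Set.univ, Filter.univ_mem, isClosed_univ, hOs⟩
  · obtain ⟨U, V, hU, hV, hchain, hunion⟩ := hseq hW
    obtain ⟨a, haW, rfl⟩ := hxW
    rw [← hunion] at haW
    obtain ⟨n, han⟩ := Set.mem_iUnion.mp haW
    refine ⟨pMap P '' ((V n)ᶜ), ?_, ?_, ?_⟩
    · exact mem_nhds_iff.mpr ⟨pMap P '' (U n), Set.image_mono (hchain n).1,
        pimg_isOpen (hU n), ⟨a, han, rfl⟩⟩
    · rw [pimg_compl (pSat_of_mem (hV n))]
      exact (pimg_isOpen (hV n)).isClosed_compl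
    · calc pMap P '' ((V n)ᶜ) ⊆ pMap P '' (U (n + 1)) :=
            Set.image_mono (hchain n).2
        _ ⊆ pMap P '' W := Set.image_mono (hunion ▸ Set.subset_iUnion U (n + 1))
        _ ⊆ O := hWO
        _ ⊆ s := hOs

lemma pTop_t0 : @T0Space (pQuot P) (pTop P) := by
  letI : TopologicalSpace (pQuot P) := pTop P
  refine ⟨fun x y h => ?_⟩
  obtain ⟨a, rfl⟩ := Quotient.exists_rep x
  obtain ⟨b, rfl⟩ := Quotient.exists_rep y
  refine Quotient.sound fun V hV => ?_
  have := h.mem_open_iff (pimg_isOpen hV)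
  rwa [show (Quotient.mk (pSetoid P) a : pQuot P) = pMap P a from rfl,
    show (Quotient.mk (pSetoid P) b : pQuot P) = pMap P b from rfl,
    mem_pimg (pSat_of_mem hV), mem_pimg (pSat_of_mem hV)] at this

lemma pTop_secondCountable (hc : P.Countable)
    (hring : ∀ A ∈ P, ∀ B ∈ P, A ∪ B ∈ P ∧ A ∩ B ∈ P) :
    @SecondCountableTopology (pQuot P) (pTop P) := by
  letI : TopologicalSpace (pQuot P) := pTop P
  have hbasis : TopologicalSpace.IsTopologicalBasis
      (insert Set.univ ((fun V => pMap P '' V) '' P)) := by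
    apply TopologicalSpace.isTopologicalBasis_of_isOpen_of_nhds
    · rintro u (rfl | ⟨V, hV, rfl⟩)
      · exact isOpen_univ
      · exact pimg_isOpen hV
    · intro a u hau hu
      rcases pTop_exists_basic hring hu a hau with rfl | ⟨W, hW, h1, h2⟩
      · exact ⟨Set.univ, Set.mem_insert _ _, trivial, subset_rfl⟩
      · exact ⟨pMap P '' W, Set.mem_insert_of_mem _ ⟨W, hW, rfl⟩, h1, h2⟩
  exact hbasis.secondCountableTopology ((hc.image _).insert _)

lemma pTop_completelyRegular_of_countable (hc : P.Countable)
    (hring : ∀ A ∈ P, ∀ B ∈ P, A ∪ B ∈ P ∧ A ∩ B ∈ P)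
    (hseq : P ⊆ seqFam P) : @CompletelyRegularSpace (pQuot P) (pTop P) := by
  letI : TopologicalSpace (pQuot P) := pTop P
  haveI : T0Space (pQuot P) := pTop_t0
  haveI : RegularSpace (pQuot P) := pTop_regularSpace hring hseq
  haveI : T3Space (pQuot P) := ⟨⟩
  haveI : SecondCountableTopology (pQuot P) := pTop_secondCountable hc hring
  haveI : TopologicalSpace.MetrizableSpace (pQuot P) := inferInstance
  letI : MetricSpace (pQuot P) := TopologicalSpace.metrizableSpaceMetric (pQuot P)
  infer_instance

lemma exists_countable_subring (hring : ∀ A ∈ P, ∀ B ∈ P, A ∪ B ∈ P ∧ A ∩ B ∈ P)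
    (hseq : P ⊆ seqFam P) {W : Set X} (hW : W ∈ P) :
    ∃ R : Set (Set X), R.Countable ∧ W ∈ R ∧ R ⊆ P ∧
      (∀ A ∈ R, ∀ B ∈ R, A ∪ B ∈ R ∧ A ∩ B ∈ R) ∧ R ⊆ seqFam R := by
  have H : ∀ A : Set X, ∃ uv : (ℕ → Set X) × (ℕ → Set X), A ∈ P →
      (∀ n, uv.1 n ∈ P) ∧ (∀ n, uv.2 n ∈ P) ∧
      (∀ k, uv.1 k ⊆ (uv.2 k)ᶜ ∧ (uv.2 k)ᶜ ⊆ uv.1 (k + 1)) ∧ (⋃ n, uv.1 n) = A := by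
    intro A
    by_cases h : A ∈ P
    · obtain ⟨u, v, h1, h2, h3, h4⟩ := hseq h
      exact ⟨(u, v), fun _ => ⟨h1, h2, h3, h4⟩⟩
    · exact ⟨(fun _ => ∅, fun _ => ∅), fun hA => absurd hA h⟩
  choose uv huv using H
  set F : Set (Set X) → Set (Set X) := fun s =>
    s ∪ Set.image2 (· ∪ ·) s s ∪ Set.image2 (· ∩ ·) s s ∪
      ⋃ A ∈ s, (Set.range (uv A).1 ∪ Set.range (uv A).2) with hF
  have hFs : ∀ s : Set (Set X), s ⊆ F s := fun s A hA =>
    Or.inl (Or.inl (Or.inl hA))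
  set R : ℕ → Set (Set X) := fun n => F^[n] {W} with hR
  have hsucc : ∀ n, R (n + 1) = F (R n) := fun n =>
    Function.iterate_succ_apply' F n {W}
  have hmono : Monotone R := by
    apply monotone_nat_of_le_succ
    intro n
    rw [hsucc n]
    exact hFs _
  have hsubP : ∀ n, R n ⊆ P := by
    intro n
    induction n with
    | zero =>
        intro A hA
        rw [Set.mem_singleton_iff.mp hA]
        exact hW
    | succ n ih =>
        rw [hsucc n]
        rintro A (((hA | hA) | hA) | hA)
        · exact ih hA
        · obtain ⟨B, hB, C, hC, rfl⟩ := hA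
          exact (hring B (ih hB) C (ih hC)).1
        · obtain ⟨B, hB, C, hC, rfl⟩ := hA
          exact (hring B (ih hB) C (ih hC)).2
        · simp only [Set.mem_iUnion] at hA
          obtain ⟨B, hB, hmem⟩ := hA
          rcases hmem with ⟨k, rfl⟩ | ⟨k, rfl⟩
          · exact (huv B (ih hB)).1 k
          · exact (huv B (ih hB)).2.1 k
  have hcnt : ∀ n, (R n).Countable := by
    intro n
    induction n with
    | zero => exact Set.countable_singleton W
    | succ n ih =>
        rw [hsucc n]
        exact (((ih.union (ih.image2 ih _)).union (ih.image2 ih _)).union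
          (ih.biUnion fun A _ => (Set.countable_range _).union (Set.countable_range _)))
  refine ⟨⋃ n, R n, Set.countable_iUnion hcnt, Set.mem_iUnion.mpr ⟨0, rfl⟩,
    Set.iUnion_subset hsubP, ?_, ?_⟩
  · intro A hA B hB
    obtain ⟨i, hAi⟩ := Set.mem_iUnion.mp hA
    obtain ⟨j, hBj⟩ := Set.mem_iUnion.mp hB
    have hAn : A ∈ R (max i j) := hmono (le_max_left i j) hAi
    have hBn : B ∈ R (max i j) := hmono (le_max_right i j) hBj
    constructor
    · exact Set.mem_iUnion.mpr ⟨max i j + 1, by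
        rw [hsucc]
        exact Or.inl (Or.inl (Or.inr ⟨A, hAn, B, hBn, rfl⟩))⟩
    · exact Set.mem_iUnion.mpr ⟨max i j + 1, by
        rw [hsucc]
        exact Or.inl (Or.inr ⟨A, hAn, B, hBn, rfl⟩)⟩
  · intro A hA
    obtain ⟨n, hAn⟩ := Set.mem_iUnion.mp hA
    have hAP : A ∈ P := hsubP n hAn
    have hrange : ∀ k, (uv A).1 k ∈ ⋃ m, R m ∧ (uv A).2 k ∈ ⋃ m, R m := by
      intro k
      constructor
      · exact Set.mem_iUnion.mpr ⟨n + 1, by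
          rw [hsucc]
          exact Or.inr (Set.mem_biUnion hAn (Or.inl ⟨k, rfl⟩))⟩
      · exact Set.mem_iUnion.mpr ⟨n + 1, by
          rw [hsucc]
          exact Or.inr (Set.mem_biUnion hAn (Or.inr ⟨k, rfl⟩))⟩
    exact ⟨(uv A).1, (uv A).2, fun k => (hrange k).1, fun k => (hrange k).2,
      (huv A hAP).2.2.1, (huv A hAP).2.2.2⟩

end AuxProof

theorem stmt8 {X : Type*} (P : Set (Set X))
    (hring : ∀ A ∈ P, ∀ B ∈ P, A ∪ B ∈ P ∧ A ∩ B ∈ P)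
    (hseq : P ⊆ seqFam P) :
    @CompletelyRegularSpace (pQuot P) (pTop P) := by
  classical
  letI : TopologicalSpace (pQuot P) := pTop P
  refine ⟨fun x K hK hxK => ?_⟩
  by_cases hKe : K = ∅
  · subst hKe
    exact ⟨fun _ => 0, continuous_const, rfl, fun y hy => absurd hy (Set.notMem_empty y)⟩
  · rcases pTop_exists_basic hring hK.isOpen_compl x hxK with hcu | ⟨W, hW, hxW, hWK⟩
    · exact absurd (by rw [← compl_compl K, hcu, Set.compl_univ] : K = (∅ : Set (pQuot P))) hKe
    · obtain ⟨R, hRc, hWR, hRP, hRring, hRseq⟩ := exists_countable_subring hring hseq hW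
      letI : TopologicalSpace (pQuot R) := pTop R
      haveI : CompletelyRegularSpace (pQuot R) :=
        pTop_completelyRegular_of_countable hRc hRring hRseq
      set g : pQuot P → pQuot R := pBond R P hRP with hg
      have hgmem : ∀ (y : pQuot P), ∀ A ∈ R, (y ∈ pMap P '' A ↔ g y ∈ pMap R '' A) := by
        intro y A hA
        obtain ⟨a, rfl⟩ := Quotient.exists_rep y
        exact (mem_pimg (pSat_of_mem (hRP hA))).trans (mem_pimg (pSat_of_mem hA)).symm
      have hgc : Continuous g := by
        apply continuous_generateFrom_iff.mpr
        rintro s ⟨V, hV, rfl⟩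
        have hpre : g ⁻¹' (pMap R '' V) = pMap P '' V := by
          ext y
          exact (hgmem y V hV).symm
        rw [hpre]
        exact pimg_isOpen (hRP hV)
      have hcl : IsClosed ((pMap R '' W)ᶜ) := (pimg_isOpen hWR).isClosed_compl
      have hgx : g x ∉ (pMap R '' W)ᶜ := fun h => h ((hgmem x W hWR).mp hxW)
      obtain ⟨f, hfc, hf0, hf1⟩ :=
        CompletelyRegularSpace.completely_regular (g x) ((pMap R '' W)ᶜ) hcl hgx
      refine ⟨f ∘ g, hfc.comp hgc, hf0, fun y hy => ?_⟩
      have hyW : g y ∈ (pMap R '' W)ᶜ := by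
        intro hmem
        exact (hWK ((hgmem y W hWR).mpr hmem)) hy
      exact hf1 hyW
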